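/- Fix N ≥ 2, a function F : (0,∞) → ℝ and σ > 0. Let λ := e^{2πi/N} and define Ω := Σ_{j=1}^{N−1} F(σ·|1 − λ^j|)·(1 − cos(2πj/N)), a real number. Then the curves z_r(t) := σ·λ^r·e^{iΩt}, r = 1, …, N, solve the asymptotic vortex equations: ż_r(t) = i·Σ_{s≠r} F(|z_r(t) − z_s(t)|)·(z_r(t) − z_s(t)) for all t and r. In other words, N vortices placed at the vertices of a regular N-gon of circumradius σ rotate rigidly about their centroid with constant angular frequency Ω. -/

import Mathlib

open Finset

/-- `N` vortices placed at the vertices of a regular `N`-gon of circumradius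
`σ`, i.e. `z_r(t) = σ·λ^r·e^{iΩt}` with `λ = e^{2πi/N}` and
`Ω = Σ_{j=1}^{N−1} F(σ|1−λ^j|)(1 − cos(2πj/N))`, solve the asymptotic vortex
equations: they rotate rigidly about their centroid with frequency `Ω`. -/
theorem rotating_polygon_solves (N : ℕ) (hN : 2 ≤ N) (F : ℝ → ℝ)
    (σ : ℝ) (hσ : 0 < σ)
    (lam : ℂ) (hlam : lam = Complex.exp (2 * Real.pi * Complex.I / N))
    (Ω : ℝ)
    (hΩ : Ω = ∑ j ∈ Finset.Ico 1 N,
      F (σ * ‖1 - lam ^ j‖) * (1 - Real.cos (2 * Real.pi * j / N)))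
    (z : Fin N → ℝ → ℂ)
    (hz : ∀ (r : Fin N) (t : ℝ),
      z r t = σ * lam ^ ((r : ℕ) + 1) * Complex.exp (Complex.I * Ω * t)) :
    ∀ (t : ℝ) (r : Fin N),
      HasDerivAt (z r)
        (Complex.I * ∑ s ∈ univ.erase r,
          (F (‖z r t - z s t‖) : ℂ) * (z r t - z s t)) t := by
  have hNpos : 0 < N := by omega
  haveI : NeZero N := ⟨by omega⟩
  have hNC : (N : ℂ) ≠ 0 := Nat.cast_ne_zero.mpr (by omega)
  have hNR : (N : ℝ) ≠ 0 := Nat.cast_ne_zero.mpr (by omega)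
  -- lam as exp of a real multiple of I
  have hlam' : lam = Complex.exp ((2 * Real.pi / N : ℝ) * Complex.I) := by
    rw [hlam]; congr 1; push_cast; ring
  have hlamN : lam ^ N = 1 := by
    rw [hlam', ← Complex.exp_nat_mul]
    rw [show (N : ℂ) * ((2 * Real.pi / N : ℝ) * Complex.I)
        = 2 * Real.pi * Complex.I by push_cast; field_simp]
    exact Complex.exp_two_pi_mul_I
  have hpowmod : ∀ a : ℕ, lam ^ a = lam ^ (a % N) := by
    intro a
    conv_lhs => rw [← Nat.div_add_mod a N]
    rw [pow_add, pow_mul, hlamN, one_pow, one_mul]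
  have hpowcongr : ∀ a b : ℕ, a % N = b % N → lam ^ a = lam ^ b := by
    intro a b h; rw [hpowmod a, hpowmod b, h]
  have hlam_pow : ∀ j : ℕ, lam ^ j
      = Complex.exp ((2 * Real.pi * j / N : ℝ) * Complex.I) := by
    intro j
    rw [hlam', ← Complex.exp_nat_mul]
    congr 1; push_cast; ring
  have habs_pow : ∀ j : ℕ, ‖lam ^ j‖ = 1 := by
    intro j; rw [hlam_pow]; exact Complex.norm_exp_ofReal_mul_I _
  have hlam_cos : ∀ j : ℕ, lam ^ j
      = (Real.cos (2 * Real.pi * j / N) : ℂ)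
        + (Real.sin (2 * Real.pi * j / N) : ℂ) * Complex.I := by
    intro j
    rw [hlam_pow, Complex.exp_mul_I, Complex.ofReal_cos, Complex.ofReal_sin]
  -- |1 - lam^(N-j)| = |1 - lam^j| for j ≤ N
  have habs_refl : ∀ j : ℕ, j ≤ N →
      ‖1 - lam ^ (N - j)‖ = ‖1 - lam ^ j‖ := by
    intro j hj
    have h1 : lam ^ (N - j) * lam ^ j = 1 := by
      rw [← pow_add, Nat.sub_add_cancel hj, hlamN]
    have h2 : 1 - lam ^ (N - j) = lam ^ (N - j) * (lam ^ j - 1) := by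
      rw [mul_sub, h1, mul_one]
    rw [h2, norm_mul, habs_pow, one_mul, norm_sub_rev]
  -- the sine sum vanishes
  have sinsum : ∑ j ∈ Finset.Ico 1 N,
      F (σ * ‖1 - lam ^ j‖) * Real.sin (2 * Real.pi * j / N) = 0 := by
    apply Finset.sum_involution (g := fun j _ => N - j)
    · intro j hj
      obtain ⟨hj1, hjN⟩ := Finset.mem_Ico.mp hj
      have hjle : j ≤ N := hjN.le
      have hcast : ((N - j : ℕ) : ℝ) = (N : ℝ) - j := by
        push_cast [Nat.cast_sub hjle]; ring
      have harg : 2 * Real.pi * ((N - j : ℕ) : ℝ) / N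
          = -(2 * Real.pi * j / N - 2 * Real.pi) := by
        rw [hcast]; field_simp; ring
      have hsin : Real.sin (2 * Real.pi * ((N - j : ℕ) : ℝ) / N)
          = -Real.sin (2 * Real.pi * j / N) := by
        rw [harg, Real.sin_neg, Real.sin_sub_two_pi]
      rw [habs_refl j hjle, hsin]; ring
    · intro j hj hfj
      obtain ⟨hj1, hjN⟩ := Finset.mem_Ico.mp hj
      intro hcontra
      have hNj : N = 2 * j := by omega
      apply hfj
      have : 2 * Real.pi * (j : ℝ) / (N : ℝ) = Real.pi := by
        rw [hNj]
        have hjR : (j : ℝ) ≠ 0 := Nat.cast_ne_zero.mpr (by omega)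
        push_cast; field_simp
      rw [this, Real.sin_pi, mul_zero]
    · intro j hj
      obtain ⟨hj1, hjN⟩ := Finset.mem_Ico.mp hj
      exact Finset.mem_Ico.mpr ⟨by omega, by omega⟩
    · intro j hj
      obtain ⟨hj1, hjN⟩ := Finset.mem_Ico.mp hj
      omega
  -- the complex coefficient sum equals Ω
  have hΩC : ∑ j ∈ Finset.Ico 1 N,
      (F (σ * ‖1 - lam ^ j‖) : ℂ) * (1 - lam ^ j) = (Ω : ℂ) := by
    have step : ∀ j ∈ Finset.Ico 1 N,
        (F (σ * ‖1 - lam ^ j‖) : ℂ) * (1 - lam ^ j)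
        = ((F (σ * ‖1 - lam ^ j‖)
              * (1 - Real.cos (2 * Real.pi * j / N)) : ℝ) : ℂ)
          - ((F (σ * ‖1 - lam ^ j‖)
              * Real.sin (2 * Real.pi * j / N) : ℝ) : ℂ) * Complex.I := by
      intro j _
      rw [hlam_cos j]; push_cast; ring
    rw [Finset.sum_congr rfl step, Finset.sum_sub_distrib, ← Finset.sum_mul,
      ← Complex.ofReal_sum, ← Complex.ofReal_sum, sinsum, hΩ]
    simp
  -- main proof
  intro t r
  set e : ℂ := Complex.exp (Complex.I * Ω * t) with he_def
  have habs_e : ‖e‖ = 1 := by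
    rw [he_def, show Complex.I * (Ω : ℂ) * (t : ℝ) = ((Ω * t : ℝ) : ℂ) * Complex.I by
      push_cast; ring]
    exact Complex.norm_exp_ofReal_mul_I _
  have habs_zr : ‖z r t‖ = σ := by
    rw [hz r t, norm_mul, norm_mul, habs_pow, habs_e, Complex.norm_of_nonneg hσ.le,
      mul_one, mul_one]
  -- z s t = z r t * lam ^ ((s - r).val)
  have hzs : ∀ s : Fin N, z s t = z r t * lam ^ ((s - r : Fin N) : ℕ) := by
    intro s
    rw [hz s t, hz r t]
    have : lam ^ ((s : ℕ) + 1) = lam ^ ((r : ℕ) + 1) * lam ^ ((s - r : Fin N) : ℕ) := by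
      rw [← pow_add]
      apply hpowcongr
      have hval : ((s - r : Fin N) : ℕ) = (N - (r : ℕ) + (s : ℕ)) % N := by
        rw [Fin.sub_def]
      rw [hval]
      have hr : (r : ℕ) < N := r.isLt
      have h1 : ((s : ℕ) + 1) % N = ((s : ℕ) + 1 + N) % N := by
        rw [Nat.add_mod_right]
      rw [h1]
      have h2 : (r : ℕ) + 1 + (N - (r : ℕ) + (s : ℕ)) % N
          ≡ (r : ℕ) + 1 + (N - (r : ℕ) + (s : ℕ)) [MOD N] :=
        Nat.ModEq.add_left _ (Nat.mod_modEq _ N)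
      have h3 : (r : ℕ) + 1 + (N - (r : ℕ) + (s : ℕ)) = (s : ℕ) + 1 + N := by omega
      calc ((s : ℕ) + 1 + N) % N = ((r : ℕ) + 1 + (N - (r : ℕ) + (s : ℕ))) % N := by
              rw [h3]
        _ = ((r : ℕ) + 1 + (N - (r : ℕ) + (s : ℕ)) % N) % N := (h2.symm : _)
    rw [this]; ring
  -- transform the sum
  open Fin.NatCast in
  have key : ∑ s ∈ univ.erase r,
      (F (‖z r t - z s t‖) : ℂ) * (z r t - z s t)
      = ∑ j ∈ Finset.Ico 1 N,
        (F (σ * ‖1 - lam ^ j‖) : ℂ) * (z r t * (1 - lam ^ j)) := by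
    apply Finset.sum_nbij' (i := fun s => ((s - r : Fin N) : ℕ))
      (j := fun j => r + (j : Fin N))
    · intro s hs
      have hsr : s ≠ r := Finset.ne_of_mem_erase hs
      have hne : s - r ≠ 0 := sub_ne_zero.mpr hsr
      refine Finset.mem_Ico.mpr ⟨?_, (s - r).isLt⟩
      have : ((s - r : Fin N) : ℕ) ≠ 0 := fun h => hne (Fin.ext (by simpa using h))
      omega
    · intro j hj
      obtain ⟨hj1, hjN⟩ := Finset.mem_Ico.mp hj
      apply Finset.mem_erase.mpr
      refine ⟨?_, Finset.mem_univ _⟩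
      intro hcontra
      have h0 : ((j : ℕ) : Fin N) = 0 := by
        have := congrArg (fun x => x - r) hcontra
        simpa using this
      have hval : j % N = 0 := by
        have := congrArg Fin.val h0
        simpa [Fin.val_natCast] using this
      rw [Nat.mod_eq_of_lt hjN] at hval
      omega
    · intro s hs
      have : (((((s - r : Fin N) : ℕ) : Fin N))) = s - r := Fin.cast_val_eq_self _
      rw [this]; abel
    · intro j hj
      obtain ⟨hj1, hjN⟩ := Finset.mem_Ico.mp hj
      have h1 : (r + ((j : ℕ) : Fin N) - r : Fin N) = ((j : ℕ) : Fin N) := by abel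
      rw [h1, Fin.val_natCast, Nat.mod_eq_of_lt hjN]
    · intro s hs
      have hd : z r t - z s t = z r t * (1 - lam ^ ((s - r : Fin N) : ℕ)) := by
        rw [hzs s]; ring
      have habs : ‖z r t - z s t‖
          = σ * ‖1 - lam ^ ((s - r : Fin N) : ℕ)‖ := by
        rw [hd, norm_mul, habs_zr]
      rw [habs, hd]
  -- the derivative
  have hderiv : HasDerivAt (z r)
      ((σ : ℂ) * lam ^ ((r : ℕ) + 1)
        * (Complex.exp (Complex.I * Ω * t) * (Complex.I * Ω))) t := by
    have hzfun : z r = fun t : ℝ =>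
        (σ : ℂ) * lam ^ ((r : ℕ) + 1) * Complex.exp (Complex.I * Ω * (t : ℝ)) := by
      funext t; exact hz r t
    rw [hzfun]
    have h0 : HasDerivAt (fun t : ℝ => ((t : ℝ) : ℂ)) 1 t := by
      simpa using (hasDerivAt_id t).ofReal_comp
    have h1 : HasDerivAt (fun t : ℝ => Complex.I * Ω * (t : ℝ)) (Complex.I * Ω) t := by
      simpa using h0.const_mul (Complex.I * (Ω : ℂ))
    have h2 := h1.cexp
    simpa [mul_comm, mul_left_comm, mul_assoc] using
      h2.const_mul ((σ : ℂ) * lam ^ ((r : ℕ) + 1))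
  convert hderiv using 1
  rw [key, show ∑ j ∈ Finset.Ico 1 N,
      (F (σ * ‖1 - lam ^ j‖) : ℂ) * (z r t * (1 - lam ^ j))
      = z r t * ∑ j ∈ Finset.Ico 1 N,
        (F (σ * ‖1 - lam ^ j‖) : ℂ) * (1 - lam ^ j) by
        rw [Finset.mul_sum]; apply Finset.sum_congr rfl; intro j _; ring]
  rw [hΩC, hz r t]
  ring
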